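/- Let λ be a partition of a positive integer n. Then the sum of the squares of all hook lengths of λ is at most the sum of the first n squares: Σ_{(i,j)∈λ} h_{ij}² ≤ Σ_{k=1}^{n} k². -/

import Mathlib

open scoped BigOperators

/-- A standard Young tableau of shape `Y` (a Young diagram with `Y.card = n`):
a bijective filling of the cells of `Y` by the numbers `1, …, n`, strictly increasing
along each row (left to right) and down each column.  Entries outside the
diagram are `0`. -/
structure SYT (Y : YoungDiagram) where
  entry : ℕ → ℕ → ℕ
  bijOn : Set.BijOn (fun c : ℕ × ℕ => entry c.1 c.2) ↑Y.cells (Set.Icc 1 Y.card)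
  row_strict : ∀ ⦃i j1 j2 : ℕ⦄, j1 < j2 → (i, j2) ∈ Y → entry i j1 < entry i j2
  col_strict : ∀ ⦃i1 i2 j : ℕ⦄, i1 < i2 → (i2, j) ∈ Y → entry i1 j < entry i2 j
  zeros : ∀ ⦃i j : ℕ⦄, (i, j) ∉ Y → entry i j = 0

namespace SYT

variable {Y : YoungDiagram}

/-- `i` is a descent of `T` : the entry `i + 1` lies in a strictly lower row
than the entry `i`. -/
def IsDescent (T : SYT Y) (i : ℕ) : Prop :=
  ∃ c ∈ Y.cells, ∃ c' ∈ Y.cells,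
    T.entry c.1 c.2 = i ∧ T.entry c'.1 c'.2 = i + 1 ∧ c.1 < c'.1

open Classical in
/-- The descent set `D(T)` of a standard Young tableau, as a finset.
(Descents necessarily lie in `{1, …, n - 1}` ⊆ `range n`.) -/
noncomputable def descents (T : SYT Y) : Finset ℕ :=
  (Finset.range Y.card).filter fun i => T.IsDescent i

/-- The major index `maj(T) = ∑_{i ∈ D(T)} i`. -/
noncomputable def maj (T : SYT Y) : ℕ :=
  ∑ i ∈ T.descents, i

/-- The descent function `d_f(T) = ∑_{i ∈ D(T)} f(i)`. -/
noncomputable def dfun (f : ℕ → ℝ) (T : SYT Y) : ℝ :=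
  ∑ i ∈ T.descents, f i

end SYT

/-- Expectation of a statistic `g` over uniformly random standard Young tableaux
of shape `Y` : `E_λ[g] = (1/f^λ) ∑_T g(T)`. -/
noncomputable def sytExpect (Y : YoungDiagram) (g : SYT Y → ℝ) : ℝ :=
  (∑ᶠ T : SYT Y, g T) / (Nat.card (SYT Y) : ℝ)

/-- Variance of a statistic `g` : `Var_λ[g] = E_λ[g²] − (E_λ[g])²`. -/
noncomputable def sytVar (Y : YoungDiagram) (g : SYT Y → ℝ) : ℝ :=
  sytExpect Y (fun T => (g T) ^ 2) - (sytExpect Y g) ^ 2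

/-- Probability of an event `P` for a uniformly random standard Young tableau of shape `Y`. -/
noncomputable def sytProb (Y : YoungDiagram) (P : SYT Y → Prop) : ℝ :=
  (Nat.card {T : SYT Y // P T} : ℝ) / (Nat.card (SYT Y) : ℝ)

/-- The constant `c(λ) = [C(n,2) − Σ_i C(λ_i,2) + Σ_j C(λ'_j,2)] / (n(n−1))`.
Rows and columns are 0-indexed; since `Y` has at most `Y.card` nonempty rows and
columns, the sums over `range Y.card` capture all nonzero terms. -/
noncomputable def cpar (Y : YoungDiagram) : ℝ :=
  ((Y.card.choose 2 : ℝ) - ∑ i ∈ Finset.range Y.card, ((Y.rowLen i).choose 2 : ℝ)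
      + ∑ j ∈ Finset.range Y.card, ((Y.colLen j).choose 2 : ℝ))
    / ((Y.card : ℝ) * ((Y.card : ℝ) - 1))

/-- The hook length of the cell `c = (i, j)` (0-indexed):
`h_{ij} = λ_{i+1} + λ'_{j+1} − (i+1) − (j+1) + 1 = rowLen i + colLen j − i − j − 1`. -/
def hookLen (Y : YoungDiagram) (c : ℕ × ℕ) : ℕ :=
  Y.rowLen c.1 + Y.colLen c.2 - c.1 - c.2 - 1

namespace HookAux

noncomputable def eraseCol (Y : YoungDiagram) : YoungDiagram where
  cells := Y.cells.preimage (fun c : ℕ × ℕ => (c.1, c.2 + 1))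
    (by intro a _ b _ h; cases a; cases b; simpa [Prod.ext_iff] using h)
  isLowerSet := by
    intro c1 c2 hle hmem
    simp only [Finset.coe_preimage, Set.mem_preimage, Finset.mem_coe, YoungDiagram.mem_cells] at *
    have hm : (c1.1, c1.2 + 1) ∈ Y.cells := (Finset.mem_preimage (f := fun c : ℕ × ℕ => (c.1, c.2 + 1))).1 hmem
    exact (Finset.mem_preimage (f := fun c : ℕ × ℕ => (c.1, c.2 + 1))).2 (Y.isLowerSet (show (c2.1, c2.2 + 1) ≤ (c1.1, c1.2 + 1) from ⟨hle.1, by have := hle.2; omega⟩) hm)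

theorem mem_eraseCol {Y : YoungDiagram} {i j : ℕ} :
    (i, j) ∈ eraseCol Y ↔ (i, j + 1) ∈ Y := by
  rw [← YoungDiagram.mem_cells, ← YoungDiagram.mem_cells]
  simp only [eraseCol]
  exact Finset.mem_preimage

theorem rowLen_eraseCol (Y : YoungDiagram) (i : ℕ) :
    (eraseCol Y).rowLen i = Y.rowLen i - 1 := by
  have key : ∀ j, j < (eraseCol Y).rowLen i ↔ j < Y.rowLen i - 1 := by
    intro j
    rw [← YoungDiagram.mem_iff_lt_rowLen, mem_eraseCol, YoungDiagram.mem_iff_lt_rowLen]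
    omega
  have h1 := key ((eraseCol Y).rowLen i)
  have h2 := key (Y.rowLen i - 1)
  omega

theorem colLen_eraseCol (Y : YoungDiagram) (j : ℕ) :
    (eraseCol Y).colLen j = Y.colLen (j + 1) := by
  have key : ∀ i, i < (eraseCol Y).colLen j ↔ i < Y.colLen (j + 1) := by
    intro i
    rw [← YoungDiagram.mem_iff_lt_colLen, mem_eraseCol, YoungDiagram.mem_iff_lt_colLen]
  have h1 := key ((eraseCol Y).colLen j)
  have h2 := key (Y.colLen (j + 1))
  omega

theorem hookLen_eraseCol {Y : YoungDiagram} {i j : ℕ} (h : (i, j) ∈ eraseCol Y) :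
    hookLen (eraseCol Y) (i, j) = hookLen Y (i, j + 1) := by
  have h1 : (i, j + 1) ∈ Y := mem_eraseCol.1 h
  have h2 : 0 < Y.rowLen i := by
    rw [YoungDiagram.mem_iff_lt_rowLen] at h1; omega
  simp only [hookLen, rowLen_eraseCol, colLen_eraseCol]
  omega

theorem filter_eq_col (Y : YoungDiagram) :
    Y.cells.filter (fun c => c.2 = 0) = Y.col 0 := by
  ext c
  simp [YoungDiagram.mem_col_iff, Finset.mem_filter, YoungDiagram.mem_cells, and_comm]

theorem sum_filter_ne (Y : YoungDiagram) (f : ℕ × ℕ → ℕ) :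
    ∑ c ∈ Y.cells.filter (fun c => ¬ c.2 = 0), f c
      = ∑ c ∈ (eraseCol Y).cells, f (c.1, c.2 + 1) := by
  apply Finset.sum_nbij' (i := fun c => (c.1, c.2 - 1)) (j := fun c => (c.1, c.2 + 1))
  · intro c hc
    rcases Finset.mem_filter.1 hc with ⟨h1, h2⟩
    rw [YoungDiagram.mem_cells] at h1
    cases' c with a b
    simp only [YoungDiagram.mem_cells, ] at *
    rw [mem_eraseCol]
    have : b - 1 + 1 = b := by omega
    rwa [this]
  · intro c hc
    rw [YoungDiagram.mem_cells] at hc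
    cases' c with a b
    rw [mem_eraseCol] at hc
    simp [Finset.mem_filter, YoungDiagram.mem_cells]
    exact hc
  · intro c hc
    have h2 := (Finset.mem_filter.1 hc).2
    cases' c with a b
    simp only at h2 ⊢
    have : b - 1 + 1 = b := by omega
    rw [this]
  · intro c hc
    cases' c with a b
    simp
  · intro c hc
    have h2 := (Finset.mem_filter.1 hc).2
    cases' c with a b
    simp only at h2 ⊢
    have : b - 1 + 1 = b := by omega
    rw [this]

theorem card_split (Y : YoungDiagram) :
    Y.card = Y.colLen 0 + (eraseCol Y).card := by
  have h := Finset.card_filter_add_card_filter_not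
    (s := Y.cells) (p := fun c => c.2 = 0)
  rw [filter_eq_col] at h
  have h2 : (Y.cells.filter (fun c => ¬ c.2 = 0)).card = (eraseCol Y).card := by
    have := sum_filter_ne Y (fun _ => 1)
    simpa using this
  rw [Y.colLen_eq_card]
  have h3 : (eraseCol Y).card = (eraseCol Y).cells.card := rfl
  have h4 : Y.card = Y.cells.card := rfl
  omega

theorem rowcol_bound (Y : YoungDiagram) (i : ℕ) :
    Y.rowLen i + Y.colLen 0 ≤ Y.card + 1 := by
  have hsub : Y.row i ∪ Y.col 0 ⊆ Y.cells := by
    intro c hc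
    rcases Finset.mem_union.1 hc with h | h
    · exact (YoungDiagram.mem_row_iff.1 h).1
    · exact (YoungDiagram.mem_col_iff.1 h).1
  have hint : (Y.row i ∩ Y.col 0) ⊆ {(i, 0)} := by
    intro c hc
    rcases Finset.mem_inter.1 hc with ⟨h1, h2⟩
    have e1 := (YoungDiagram.mem_row_iff.1 h1).2
    have e2 := (YoungDiagram.mem_col_iff.1 h2).2
    simp only [Finset.mem_singleton]
    cases c; simp_all
  have hu := Finset.card_union_add_card_inter (Y.row i) (Y.col 0)
  have h1 : (Y.row i ∪ Y.col 0).card ≤ Y.card := Finset.card_le_card hsub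
  have h2 : (Y.row i ∩ Y.col 0).card ≤ 1 := by
    simpa using Finset.card_le_card hint
  rw [Y.rowLen_eq_card, Y.colLen_eq_card]
  omega

theorem main : ∀ (n : ℕ) (Y : YoungDiagram), Y.card = n →
    ∑ c ∈ Y.cells, (hookLen Y c) ^ 2 ≤ ∑ k ∈ Finset.Icc 1 n, k ^ 2 := by
  intro n
  induction n using Nat.strong_induction_on with
  | _ n ih =>
    intro Y hY
    rcases Nat.eq_zero_or_pos n with rfl | hn
    · have : Y.cells = ∅ := Finset.card_eq_zero.1 hY
      simp [this]
    -- r := colLen 0 ≥ 1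
    set r := Y.colLen 0 with hr
    have hrn : r ≤ n := by have := card_split Y; omega
    have hr1 : 1 ≤ r := by
      by_contra h
      have : r = 0 := by omega
      have := card_split Y
      have hc : (eraseCol Y).card = n := by omega
      -- if colLen 0 = 0 then Y empty so n = 0, contradiction
      have : Y.cells = ∅ := by
        rw [Finset.eq_empty_iff_forall_notMem]
        intro c hc'
        rw [YoungDiagram.mem_cells] at hc'
        cases' c with a b
        have h0 : (a, 0) ∈ Y := Y.up_left_mem le_rfl (Nat.zero_le b) hc'
        rw [YoungDiagram.mem_iff_lt_colLen] at h0
        omega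
      rw [YoungDiagram.card, this] at hY
      simp at hY
      omega
    -- split the sum
    rw [← Finset.sum_filter_add_sum_filter_not Y.cells (fun c => c.2 = 0)]
    have hsplit2 : ∑ c ∈ Y.cells.filter (fun c => ¬ c.2 = 0), (hookLen Y c) ^ 2
        = ∑ c ∈ (eraseCol Y).cells, (hookLen (eraseCol Y) c) ^ 2 := by
      rw [sum_filter_ne Y (fun c => (hookLen Y c) ^ 2)]
      apply Finset.sum_congr rfl
      intro c hc
      cases' c with a b
      rw [hookLen_eraseCol ((YoungDiagram.mem_cells _).1 hc)]
    rw [hsplit2, filter_eq_col]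
    -- IH on eraseCol
    have hcard : (eraseCol Y).card = n - r := by have := card_split Y; omega
    have hIH := ih (n - r) (by omega) (eraseCol Y) hcard
    -- column sum bound
    have hcol : ∑ c ∈ Y.col 0, (hookLen Y c) ^ 2 ≤ ∑ i ∈ Finset.range r, (n - i) ^ 2 := by
      rw [YoungDiagram.col_eq_prod, Finset.sum_product]
      simp only [Finset.sum_singleton]
      apply Finset.sum_le_sum
      intro i hi
      rw [Finset.mem_range] at hi
      have hb := rowcol_bound Y i
      have : hookLen Y (i, 0) ≤ n - i := by
        simp only [hookLen]
        omega
      exact Nat.pow_le_pow_left this 2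
    -- combine: ∑ range r (n-i)^2 + ∑ Icc 1 (n-r) = ∑ Icc 1 n
    have hre : ∑ k ∈ Finset.Icc 1 n, k ^ 2 = ∑ i ∈ Finset.range n, (n - i) ^ 2 := by
      apply Finset.sum_nbij' (i := fun k => n - k) (j := fun i => n - i) <;>
        simp +contextual <;> omega
    have hsplit3 : ∑ i ∈ Finset.range n, (n - i) ^ 2
        = ∑ i ∈ Finset.range r, (n - i) ^ 2 + ∑ i ∈ Finset.Ico r n, (n - i) ^ 2 := by
      rw [Finset.range_eq_Ico, ← Finset.sum_Ico_consecutive _ (Nat.zero_le r) hrn]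
      rw [Finset.range_eq_Ico]
    have htail : ∑ i ∈ Finset.Ico r n, (n - i) ^ 2 = ∑ k ∈ Finset.Icc 1 (n - r), k ^ 2 := by
      apply Finset.sum_nbij' (i := fun i => n - i) (j := fun k => n - k) <;>
        simp +contextual <;> omega
    rw [hre, hsplit3]
    omega

end HookAux


/-- For a partition `λ` of a positive integer `n`, the sum of the
squares of all hook lengths is at most the sum of the first `n` squares:
`Σ_{(i,j)∈λ} h_{ij}² ≤ Σ_{k=1}^{n} k²`. -/
theorem sum_hookLen_sq_le (n : ℕ) (hn : 0 < n) (Y : YoungDiagram) (hY : Y.card = n) :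
    ∑ c ∈ Y.cells, (hookLen Y c) ^ 2 ≤ ∑ k ∈ Finset.Icc 1 n, k ^ 2 := by
  exact HookAux.main n Y hY
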